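/- For all c ∈ ℝ, h > 0, ω ∈ ℝ and x ∈ ℝ, applying the BFD stencils to the complex exponential f(x) = e^{iωx} gives S⁻ₕf(x) = μ₁(ω) e^{iωx} and S⁺ₕf(x) = μ₂(ω) e^{iωx}, where μ₁(ω) = (8/(3h²))[−sin²(hω/4)(7−cos(hω/2)) − 4ic e^{ihω/4} sin⁵(hω/4)] and μ₂(ω) = (8/(3h²))[−sin²(hω/4)(7−cos(hω/2)) + 4ic e^{−ihω/4} sin⁵(hω/4)]. -/

import Mathlib

open Complex

/-- The BFD stencil `S⁻ₕ` (node `x_{j-1/4}`) applied to `f : ℝ → ℂ`. -/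
noncomputable def Sminus (c h : ℝ) (f : ℝ → ℂ) (x : ℝ) : ℂ :=
  (1/(3*(h:ℂ)^2)) *
    ((-f (x-h) + 16*f (x-h/2) - 30*f x + 16*f (x+h/2) - f (x+h)) +
      (c:ℂ) * (f (x-h) - 5*f (x-h/2) + 10*f x - 10*f (x+h/2) + 5*f (x+h)
        - f (x+3*h/2)))

/-- The BFD stencil `S⁺ₕ` (node `x_{j+1/4}`) applied to `f : ℝ → ℂ`. -/
noncomputable def Splus (c h : ℝ) (f : ℝ → ℂ) (x : ℝ) : ℂ :=
  (1/(3*(h:ℂ)^2)) *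
    ((-f (x-h) + 16*f (x-h/2) - 30*f x + 16*f (x+h/2) - f (x+h)) +
      (c:ℂ) * (-f (x-3*h/2) + 5*f (x-h) - 10*f (x-h/2) + 10*f x - 5*f (x+h/2)
        + f (x+h)))

/-- The symbol `μ₁(ω)`. -/
noncomputable def mu1 (c h ω : ℝ) : ℂ :=
  (8/(3*(h:ℂ)^2)) *
    (-(Real.sin (h*ω/4) : ℂ)^2 * (7 - (Real.cos (h*ω/2) : ℂ))
      - 4*I*(c:ℂ)*Complex.exp (I*(h*ω/4)) * (Real.sin (h*ω/4) : ℂ)^5)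

/-- The symbol `μ₂(ω)`. -/
noncomputable def mu2 (c h ω : ℝ) : ℂ :=
  (8/(3*(h:ℂ)^2)) *
    (-(Real.sin (h*ω/4) : ℂ)^2 * (7 - (Real.cos (h*ω/2) : ℂ))
      + 4*I*(c:ℂ)*Complex.exp (-I*(h*ω/4)) * (Real.sin (h*ω/4) : ℂ)^5)

set_option maxHeartbeats 1000000 in
private lemma alg1 (c H w e j : ℂ) (hw : w ≠ 0) (hH : H ≠ 0) (hj : j^2 = -1) :
    (1/(3*H^2)) *
    ((-(e/w^4) + 16*(e/w^2) - 30*e + 16*(e*w^2) - e*w^4) +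
      c * ((e/w^4) - 5*(e/w^2) + 10*e - 10*(e*w^2) + 5*(e*w^4) - e*w^6))
    = (8/(3*H^2)) *
    (-((w^2 - 1)*j/(-2*w))^2 * (7 - (w^4+1)/(2*w^2))
      - 4*j*c*w*((w^2 - 1)*j/(-2*w))^5) * e := by
  have hj6 : j^6 = -1 := by rw [(by norm_num : (6:ℕ) = 2*3), pow_mul, hj]; norm_num
  have hj4 : j^4 = 1 := by rw [(by norm_num : (4:ℕ) = 2*2), pow_mul, hj]; norm_num
  have hj10 : j^10 = -1 := by rw [(by norm_num : (10:ℕ) = 2*5), pow_mul, hj]; norm_num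
  field_simp
  ring_nf
  simp only [hj, hj4, hj6, hj10]
  ring

set_option maxHeartbeats 1000000 in
private lemma alg2 (c H w e j : ℂ) (hw : w ≠ 0) (hH : H ≠ 0) (hj : j^2 = -1) :
    (1/(3*H^2)) *
    ((-(e/w^4) + 16*(e/w^2) - 30*e + 16*(e*w^2) - e*w^4) +
      c * (-(e/w^6) + 5*(e/w^4) - 10*(e/w^2) + 10*e - 5*(e*w^2) + e*w^4))
    = (8/(3*H^2)) *
    (-((w^2 - 1)*j/(-2*w))^2 * (7 - (w^4+1)/(2*w^2))
      + 4*j*c*w⁻¹*((w^2 - 1)*j/(-2*w))^5) * e := by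
  have hj6 : j^6 = -1 := by rw [(by norm_num : (6:ℕ) = 2*3), pow_mul, hj]; norm_num
  have hj4 : j^4 = 1 := by rw [(by norm_num : (4:ℕ) = 2*2), pow_mul, hj]; norm_num
  have hj10 : j^10 = -1 := by rw [(by norm_num : (10:ℕ) = 2*5), pow_mul, hj]; norm_num
  field_simp
  ring_nf
  simp only [hj, hj4, hj6, hj10]
  ring

/-- Applying the BFD stencils to `f(x) = e^{iωx}` gives
`S⁻ₕ f(x) = μ₁(ω) e^{iωx}` and `S⁺ₕ f(x) = μ₂(ω) e^{iωx}`. -/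
theorem bfd_stencil_symbol (c h ω x : ℝ) (hh : 0 < h) :
    Sminus c h (fun y : ℝ => Complex.exp (I*ω*y)) x
      = mu1 c h ω * Complex.exp (I*ω*x) ∧
    Splus c h (fun y : ℝ => Complex.exp (I*ω*y)) x
      = mu2 c h ω * Complex.exp (I*ω*x) := by
  set w := Complex.exp (I*(h*ω/4)) with hw
  set e := Complex.exp (I*(ω:ℂ)*(x:ℂ)) with he
  have hwne : w ≠ 0 := Complex.exp_ne_zero _
  have hhne : (h:ℂ) ≠ 0 := by exact_mod_cast hh.ne'
  have hI2 : (I:ℂ)^2 = -1 := Complex.I_sq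
  have hshift : ∀ (y : ℝ) (k : ℕ), Complex.exp (I*ω*(y + k*(h/4)))
      = Complex.exp (I*ω*y) * w ^ k := by
    intro y k
    have : I*ω*(y + k*(h/4)) = I*ω*y + k*(I*(h*ω/4)) := by ring
    rw [this, Complex.exp_add, Complex.exp_nat_mul]
  have node : ∀ (y : ℝ) (k : ℕ), y + k*(h/4) = x →
      Complex.exp (I*ω*y) = e / w ^ k := by
    intro y k hyk
    rw [eq_div_iff (pow_ne_zero _ hwne), ← hshift]
    congr 1
    rw [← hyk]; push_cast; ring
  have node' : ∀ (y : ℝ) (k : ℕ), (x : ℝ) + k*(h/4) = y →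
      Complex.exp (I*ω*y) = e * w ^ k := by
    intro y k hyk
    rw [← hshift]
    congr 1
    rw [← hyk]; push_cast; ring
  have h1 : Complex.exp (I*ω*((x-h : ℝ) : ℂ)) = e / w ^ 4 := node _ 4 (by ring)
  have h2 : Complex.exp (I*ω*((x-h/2 : ℝ) : ℂ)) = e / w ^ 2 := node _ 2 (by ring)
  have h0 : Complex.exp (I*ω*((x : ℝ) : ℂ)) = e := rfl
  have h3 : Complex.exp (I*ω*((x+h/2 : ℝ) : ℂ)) = e * w ^ 2 := node' _ 2 (by ring)
  have h4 : Complex.exp (I*ω*((x+h : ℝ) : ℂ)) = e * w ^ 4 := node' _ 4 (by ring)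
  have h6 : Complex.exp (I*ω*((x+3*h/2 : ℝ) : ℂ)) = e * w ^ 6 := node' _ 6 (by ring)
  have hm6 : Complex.exp (I*ω*((x-3*h/2 : ℝ) : ℂ)) = e / w ^ 6 := node _ 6 (by ring)
  have hs : (Real.sin (h*ω/4) : ℂ) = (w^2 - 1) * I / (-2*w) := by
    rw [Complex.ofReal_sin, Complex.sin,
      (by push_cast; ring : -((h*ω/4 : ℝ) : ℂ)*I = -(I*(h*ω/4))),
      (by push_cast; ring : ((h*ω/4 : ℝ) : ℂ)*I = I*(h*ω/4)), Complex.exp_neg, ← hw]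
    field_simp
    ring
  have hw2 : w^2 = Complex.exp (I*((h:ℂ)*ω/2)) := by
    rw [hw, ← Complex.exp_nat_mul]; congr 1; push_cast; ring
  have hc : (Real.cos (h*ω/2) : ℂ) = (w^4 + 1) / (2*w^2) := by
    rw [Complex.ofReal_cos, Complex.cos,
      (by push_cast; ring : -((h*ω/2 : ℝ) : ℂ)*I = -(I*((h:ℂ)*ω/2))),
      (by push_cast; ring : ((h*ω/2 : ℝ) : ℂ)*I = I*((h:ℂ)*ω/2)), Complex.exp_neg, ← hw2]
    rw [(by ring : w^4 = (w^2)^2)]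
    field_simp
  have hwinv : Complex.exp (-I*((h:ℂ)*ω/4)) = w⁻¹ := by
    rw [(by ring : -I*((h:ℂ)*ω/4) = -(I*((h:ℂ)*ω/4))), Complex.exp_neg, ← hw]
  constructor
  · show (1/(3*(h:ℂ)^2)) * _ = _
    rw [mu1]
    simp only [h1, h2, h0, h3, h4, h6, hs, hc, ← hw]
    exact alg1 c h w e I hwne hhne hI2
  · show (1/(3*(h:ℂ)^2)) * _ = _
    rw [mu2]
    simp only [h1, h2, h0, h3, h4, hm6, hs, hc, hwinv]
    exact alg2 c h w e I hwne hhne hI2
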